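/- Let A be symmetric positive definite. A symmetric positive definite matrix X satisfies X² = A if and only if X = [(X+A)⁻¹ + (X+I)⁻¹]⁻¹, i.e., X is a fixed point of the Sra iteration. -/

import Mathlib

open Matrix Filter

variable {n : ℕ}

/-- Largest (real) eigenvalue: supremum of the real spectrum. -/
noncomputable def maxEig (M : Matrix (Fin n) (Fin n) ℝ) : ℝ := sSup (spectrum ℝ M)

/-- Smallest (real) eigenvalue: infimum of the real spectrum. -/
noncomputable def minEig (M : Matrix (Fin n) (Fin n) ℝ) : ℝ := sInf (spectrum ℝ M)

/-- Thompson metric via the spectral formula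
`δ_T(M,N) = max {log λ_max(M⁻¹N), log λ_max(N⁻¹M)}`. -/
noncomputable def deltaT (X Y : Matrix (Fin n) (Fin n) ℝ) : ℝ :=
  max (Real.log (maxEig (X⁻¹ * Y))) (Real.log (maxEig (Y⁻¹ * X)))

/-- Spectral (ℓ²-operator) norm of a matrix. -/
noncomputable def sNorm (M : Matrix (Fin n) (Fin n) ℝ) : ℝ :=
  ‖Matrix.toEuclideanCLM (𝕜 := ℝ) M‖

open Classical in
/-- The unique positive semidefinite square root (junk value `1` off PSD matrices). -/
noncomputable def sqrtM (M : Matrix (Fin n) (Fin n) ℝ) : Matrix (Fin n) (Fin n) ℝ :=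
  if h : M.PosSemidef then
    h.1.eigenvectorUnitary.1 * diagonal ((↑) ∘ (Real.sqrt ·) ∘ h.1.eigenvalues) *
      (star h.1.eigenvectorUnitary : Matrix (Fin n) (Fin n) ℝ)
  else 1

/-- Matrix logarithm via the continuous functional calculus. -/
noncomputable def mlog (M : Matrix (Fin n) (Fin n) ℝ) : Matrix (Fin n) (Fin n) ℝ :=
  cfc Real.log M

/-- Loewner order: `A ⪯ B` iff `B - A` is positive semidefinite. -/
def loewner (A B : Matrix (Fin n) (Fin n) ℝ) : Prop := (B - A).PosSemidef

theorem stmt13 (A X : Matrix (Fin n) (Fin n) ℝ) (hA : A.PosDef) (hX : X.PosDef) :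
    X ^ 2 = A ↔ X = ((X + A)⁻¹ + (X + 1)⁻¹)⁻¹ := by
  have hXA : (X + A).PosDef := hX.add hA
  have hX1 : (X + 1).PosDef := hX.add Matrix.PosDef.one
  have hdX : IsUnit X.det := isUnit_iff_isUnit_det X |>.1 hX.isUnit
  have hdXA : IsUnit (X + A).det := isUnit_iff_isUnit_det _ |>.1 hXA.isUnit
  have hdX1 : IsUnit (X + 1).det := isUnit_iff_isUnit_det _ |>.1 hX1.isUnit
  constructor
  · intro h
    have e1 : X + A = X * (X + 1) := by rw [← h]; noncomm_ring
    have key : ((X + A)⁻¹ + (X + 1)⁻¹) * X = 1 := by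
      rw [e1, Matrix.mul_inv_rev, add_mul, Matrix.mul_assoc,
        Matrix.nonsing_inv_mul X hdX, Matrix.mul_one]
      calc (X + 1)⁻¹ + (X + 1)⁻¹ * X = (X + 1)⁻¹ * (X + 1) := by noncomm_ring
        _ = 1 := Matrix.nonsing_inv_mul _ hdX1
    exact (Matrix.inv_eq_right_inv key).symm
  · intro h
    have hS : ((X + A)⁻¹ + (X + 1)⁻¹).PosDef := hXA.inv.add hX1.inv
    have hdS : IsUnit ((X + A)⁻¹ + (X + 1)⁻¹).det :=
      isUnit_iff_isUnit_det _ |>.1 hS.isUnit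
    have key : X * (X + A)⁻¹ + X * (X + 1)⁻¹ = 1 := by
      have := Matrix.nonsing_inv_mul _ hdS
      rw [← h, Matrix.mul_add] at this
      exact this
    have e2 : X * (X + A)⁻¹ * (X + 1) + X * (X + 1)⁻¹ * (X + 1) = X + 1 := by
      rw [← add_mul, key, Matrix.one_mul]
    rw [Matrix.mul_assoc X (X + 1)⁻¹ (X + 1), Matrix.nonsing_inv_mul _ hdX1,
      Matrix.mul_one] at e2
    conv_rhs at e2 => rw [add_comm]
    have e3 : X * (X + A)⁻¹ * (X + 1) = 1 := add_right_cancel e2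
    have e4 : X * (X + A)⁻¹ = (X + 1)⁻¹ := by
      have := congrArg (· * (X + 1)⁻¹) e3
      simpa [Matrix.mul_assoc, Matrix.mul_nonsing_inv _ hdX1] using this
    have e5 : (X + 1) * X = X + A := by
      have := congrArg (fun M => (X + 1) * M * (X + A)) e4
      simp only [Matrix.mul_assoc] at this
      rw [Matrix.nonsing_inv_mul _ hdXA, Matrix.mul_one,
        ← Matrix.mul_assoc (X + 1) (X + 1)⁻¹ (X + A),
        Matrix.mul_nonsing_inv _ hdX1, Matrix.one_mul] at this
      exact this
    have h6 : X ^ 2 + X = X + A := by rw [← e5]; noncomm_ring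
    linear_combination (norm := noncomm_ring) h6
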